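/- Let A = (a_ij) ∈ ℝ^{n×n} be an H₊-matrix and A = (M₁+φ) − (N₁+φ) an H-splitting of A (i.e. ⟨M₁+φ⟩ − |N₁+φ| is a nonsingular M-matrix), with φ diagonal and φ₁ = diag(w_11,…,w_nn), φ₂ = diag(ξ_11,…,ξ_nn) positive diagonal, and φ₂ ≥ D_{φ₁} = φ₁·diag(A). Let G = (g_ij) ≥ 0 satisfy |ψ(x) − ψ(y)| ≤ G|x − y| for all x, y ∈ ℝⁿ, together with g_ii ≤ (w_ii|n_ii + φ_ii| − (w_ii n_ii + |w_ii φ_ii|))/(2ξ_ii) for all i and g_ij ≤ (|w_ii m_ij| + |w_ii n_ij| − |w_ii a_ij|)/(2ξ_ii) for i ≠ j, where M₁ = (m_ij), N₁ = (n_ij) and φ = diag(φ_11,…,φ_nn). Then ρ(L) < 1 for L = |(M_{φ₁}+φ_{φ₁}+φ₂)⁻¹|(|N_{φ₁}+φ_{φ₁}| + |A_{φ₁}−φ₂| + 2φ₂G); consequently, if z* solves ICP(q,A,ψ), the sequence generated by Method 3.1 converges to z* from any initial vector and z* is the unique solution. -/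

import Mathlib

open Matrix Finset
open scoped NNReal ENNReal

noncomputable def specRad {n : ℕ} (A : Matrix (Fin n) (Fin n) ℝ) : ℝ :=
  (spectralRadius ℂ (A.map (algebraMap ℝ ℂ))).toReal

def matAbs {n : ℕ} (A : Matrix (Fin n) (Fin n) ℝ) : Matrix (Fin n) (Fin n) ℝ :=
  fun i j => |A i j|

def vecAbs {n : ℕ} (x : Fin n → ℝ) : Fin n → ℝ := fun i => |x i|

def cmpMat {n : ℕ} (A : Matrix (Fin n) (Fin n) ℝ) : Matrix (Fin n) (Fin n) ℝ :=
  fun i j => if i = j then |A i j| else -|A i j|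

def PosDiag {n : ℕ} (Φ : Matrix (Fin n) (Fin n) ℝ) : Prop :=
  Φ.IsDiag ∧ ∀ i, 0 < Φ i i

def ZMat {n : ℕ} (A : Matrix (Fin n) (Fin n) ℝ) : Prop :=
  ∀ i j, i ≠ j → A i j ≤ 0

def NonsingularMMatrix {n : ℕ} (A : Matrix (Fin n) (Fin n) ℝ) : Prop :=
  ZMat A ∧ IsUnit A.det ∧ ∀ i j, 0 ≤ A⁻¹ i j

def SDD {n : ℕ} (A : Matrix (Fin n) (Fin n) ℝ) : Prop :=
  ∀ i, ∑ j ∈ Finset.univ.erase i, |A i j| < |A i i|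

def ICPsol {n : ℕ} (A : Matrix (Fin n) (Fin n) ℝ) (q : Fin n → ℝ)
    (ψ : (Fin n → ℝ) → (Fin n → ℝ)) (z : Fin n → ℝ) : Prop :=
  (∀ i, 0 ≤ (A *ᵥ z + q) i) ∧ (∀ i, 0 ≤ (z - ψ z) i) ∧ (A *ᵥ z + q) ⬝ᵥ (z - ψ z) = 0

def HplusMatrix {n : ℕ} (A : Matrix (Fin n) (Fin n) ℝ) : Prop :=
  NonsingularMMatrix (cmpMat A) ∧ ∀ i, 0 < A i i

namespace StmtAux

variable {n : ℕ}

lemma mulVec_eq_sum (M : Matrix (Fin n) (Fin n) ℝ) (x : Fin n → ℝ) (i : Fin n) :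
    (M *ᵥ x) i = ∑ j, M i j * x j := rfl

lemma mulVec_mono {M : Matrix (Fin n) (Fin n) ℝ} (hM : ∀ i j, 0 ≤ M i j)
    {x y : Fin n → ℝ} (h : ∀ i, x i ≤ y i) (i : Fin n) : (M *ᵥ x) i ≤ (M *ᵥ y) i := by
  rw [mulVec_eq_sum, mulVec_eq_sum]
  exact Finset.sum_le_sum fun j _ => mul_le_mul_of_nonneg_left (h j) (hM i j)

lemma mulVec_nonneg {M : Matrix (Fin n) (Fin n) ℝ} (hM : ∀ i j, 0 ≤ M i j)
    {x : Fin n → ℝ} (hx : ∀ i, 0 ≤ x i) (i : Fin n) : 0 ≤ (M *ᵥ x) i := by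
  rw [mulVec_eq_sum]
  exact Finset.sum_nonneg fun j _ => mul_nonneg (hM i j) (hx j)

lemma abs_mulVec_le (M : Matrix (Fin n) (Fin n) ℝ) (x : Fin n → ℝ) (i : Fin n) :
    |(M *ᵥ x) i| ≤ (matAbs M *ᵥ vecAbs x) i := by
  rw [mulVec_eq_sum, mulVec_eq_sum]
  calc |∑ j, M i j * x j| ≤ ∑ j, |M i j * x j| := Finset.abs_sum_le_sum_abs _ _
  _ = ∑ j, matAbs M i j * vecAbs x j := by simp [matAbs, vecAbs, abs_mul]

lemma matAbs_nonneg (M : Matrix (Fin n) (Fin n) ℝ) (i j : Fin n) : 0 ≤ matAbs M i j :=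
  abs_nonneg _

lemma matAbs_of_nonneg {M : Matrix (Fin n) (Fin n) ℝ} (h : ∀ i j, 0 ≤ M i j) :
    matAbs M = M := by
  funext i j; exact abs_of_nonneg (h i j)

/-- Core iteration lemma: if `J ≥ 0`, `v > 0`, `J v < v` and `w ≤ J w`, then `w ≤ 0`. -/
lemma core_le_zero {J : Matrix (Fin n) (Fin n) ℝ} {v : Fin n → ℝ}
    (hJ : ∀ i j, 0 ≤ J i j) (hv : ∀ i, 0 < v i) (hJv : ∀ i, (J *ᵥ v) i < v i)
    {w : Fin n → ℝ} (hw : ∀ i, w i ≤ (J *ᵥ w) i) (i : Fin n) : w i ≤ 0 := by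
  set c : ℝ := ↑(Finset.univ.sup fun k => Real.toNNReal ((J *ᵥ v) k / v k)) with hc
  have hc0 : 0 ≤ c := NNReal.coe_nonneg _
  have hcb : ∀ k, (J *ᵥ v) k ≤ c * v k := by
    intro k
    have h1 : (J *ᵥ v) k / v k ≤ c := by
      have h2 := Finset.le_sup (f := fun k => Real.toNNReal ((J *ᵥ v) k / v k))
        (Finset.mem_univ k)
      have h3 : ((Real.toNNReal ((J *ᵥ v) k / v k) : ℝ≥0) : ℝ) ≤ c := by
        rw [hc]; exact_mod_cast h2
      rwa [Real.coe_toNNReal _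
        (div_nonneg (mulVec_nonneg hJ (fun j => (hv j).le) k) (hv k).le)] at h3
    calc (J *ᵥ v) k = ((J *ᵥ v) k / v k) * v k := (div_mul_cancel₀ _ (hv k).ne').symm
    _ ≤ c * v k := mul_le_mul_of_nonneg_right h1 (hv k).le
  have hc1 : c < 1 := by
    have h4 : (Finset.univ.sup fun k => Real.toNNReal ((J *ᵥ v) k / v k)) < 1 := by
      rw [Finset.sup_lt_iff (by norm_num : (⊥ : ℝ≥0) < 1)]
      intro k _
      rw [← Real.toNNReal_one]
      exact (Real.toNNReal_lt_toNNReal_iff one_pos).mpr ((div_lt_one (hv k)).mpr (hJv k))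
    rw [hc]
    exact_mod_cast h4
  set t : ℝ := ↑(Finset.univ.sup fun k => Real.toNNReal (w k / v k)) with ht
  have ht0 : 0 ≤ t := NNReal.coe_nonneg _
  have htb : ∀ k, w k ≤ t * v k := by
    intro k
    rcases le_or_gt (w k) 0 with h | h
    · exact h.trans (mul_nonneg ht0 (hv k).le)
    · have h1 : w k / v k ≤ t := by
        have h2 := Finset.le_sup (f := fun k => Real.toNNReal (w k / v k)) (Finset.mem_univ k)
        have h3 : ((Real.toNNReal (w k / v k) : ℝ≥0) : ℝ) ≤ t := by
          rw [ht]; exact_mod_cast h2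
        rwa [Real.coe_toNNReal _ (div_nonneg h.le (hv k).le)] at h3
      calc w k = (w k / v k) * v k := (div_mul_cancel₀ _ (hv k).ne').symm
      _ ≤ t * v k := mul_le_mul_of_nonneg_right h1 (hv k).le
  have hind : ∀ m : ℕ, ∀ k, w k ≤ t * c ^ m * v k := by
    intro m
    induction m with
    | zero => simpa using htb
    | succ m ih =>
      intro k
      have h1 : (J *ᵥ w) k ≤ (J *ᵥ fun j => t * c ^ m * v j) k :=
        mulVec_mono hJ (fun j => ih j) k
      have h2 : (J *ᵥ fun j => t * c ^ m * v j) k = t * c ^ m * (J *ᵥ v) k := by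
        rw [mulVec_eq_sum, mulVec_eq_sum, Finset.mul_sum]
        exact Finset.sum_congr rfl fun j _ => by ring
      have h3 : t * c ^ m * (J *ᵥ v) k ≤ t * c ^ m * (c * v k) :=
        mul_le_mul_of_nonneg_left (hcb k) (by positivity)
      calc w k ≤ (J *ᵥ w) k := hw k
      _ ≤ t * c ^ m * (J *ᵥ v) k := h2 ▸ h1
      _ ≤ t * c ^ m * (c * v k) := h3
      _ = t * c ^ (m + 1) * v k := by ring
  have hlim : Filter.Tendsto (fun m : ℕ => t * v i * c ^ m) Filter.atTop (nhds 0) := by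
    simpa using (tendsto_pow_atTop_nhds_zero_of_lt_one hc0 hc1).const_mul (t * v i)
  refine ge_of_tendsto hlim (Filter.Eventually.of_forall fun m => ?_)
  calc w i ≤ t * c ^ m * v i := hind m i
  _ = t * v i * c ^ m := by ring


/-- Jacobi-type iteration matrix associated to `B`. -/
noncomputable def auxJ (B : Matrix (Fin n) (Fin n) ℝ) : Matrix (Fin n) (Fin n) ℝ :=
  fun i j => if i = j then 0 else |B i j| / |B i i|

lemma auxJ_nonneg (B : Matrix (Fin n) (Fin n) ℝ) (i j : Fin n) : 0 ≤ auxJ B i j := by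
  unfold auxJ; split
  · exact le_refl 0
  · positivity

lemma cmp_mulVec (B : Matrix (Fin n) (Fin n) ℝ) (x : Fin n → ℝ) (i : Fin n) :
    (cmpMat B *ᵥ x) i = |B i i| * x i - ∑ j ∈ Finset.univ.erase i, |B i j| * x j := by
  rw [mulVec_eq_sum, ← Finset.sum_erase_add _ _ (Finset.mem_univ i)]
  have h1 : ∀ j ∈ Finset.univ.erase i, cmpMat B i j * x j = -(|B i j| * x j) := by
    intro j hj
    have : i ≠ j := fun h => (Finset.ne_of_mem_erase hj) h.symm
    simp [cmpMat, this]
  rw [Finset.sum_congr rfl h1, Finset.sum_neg_distrib]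
  simp [cmpMat]
  ring

lemma auxJ_mulVec (B : Matrix (Fin n) (Fin n) ℝ) (x : Fin n → ℝ) (i : Fin n) :
    (auxJ B *ᵥ x) i = (∑ j ∈ Finset.univ.erase i, |B i j| * x j) / |B i i| := by
  rw [mulVec_eq_sum, ← Finset.sum_erase_add _ _ (Finset.mem_univ i)]
  have h1 : ∀ j ∈ Finset.univ.erase i, auxJ B i j * x j = |B i j| * x j / |B i i| := by
    intro j hj
    have : i ≠ j := fun h => (Finset.ne_of_mem_erase hj) h.symm
    simp [auxJ, this]
    ring
  rw [Finset.sum_congr rfl h1, ← Finset.sum_div]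
  simp [auxJ]

section HM
variable {B : Matrix (Fin n) (Fin n) ℝ} {v : Fin n → ℝ}
  (hv : ∀ i, 0 < v i) (hcv : ∀ i, 0 < (cmpMat B *ᵥ v) i)

include hv hcv

lemma hm_diag_pos (i : Fin n) : 0 < |B i i| := by
  have h := hcv i
  rw [cmp_mulVec] at h
  have hS : 0 ≤ ∑ j ∈ Finset.univ.erase i, |B i j| * v j :=
    Finset.sum_nonneg fun j _ => mul_nonneg (abs_nonneg _) (hv j).le
  have h2 : 0 < |B i i| * v i := by linarith
  rcases (abs_nonneg (B i i)).lt_or_eq with h3 | h3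
  · exact h3
  · exfalso; rw [← h3, zero_mul] at h2; exact lt_irrefl 0 h2

lemma hm_Jv (i : Fin n) : (auxJ B *ᵥ v) i < v i := by
  rw [auxJ_mulVec]
  rw [div_lt_iff₀ (hm_diag_pos hv hcv i)]
  have h := hcv i
  rw [cmp_mulVec] at h
  linarith

/-- If `B *ᵥ x = y` then `|x| ≤ |D|⁻¹ |y| + J |x|` componentwise. -/
lemma hm_kv {x y : Fin n → ℝ} (hxy : B *ᵥ x = y) (i : Fin n) :
    |x i| ≤ |y i| / |B i i| + (auxJ B *ᵥ vecAbs x) i := by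
  have hd := hm_diag_pos hv hcv i
  have h0 := congrFun hxy i
  rw [mulVec_eq_sum, ← Finset.sum_erase_add _ _ (Finset.mem_univ i)] at h0
  have h1 : B i i * x i = y i - ∑ j ∈ Finset.univ.erase i, B i j * x j := by linarith
  have h2 : |B i i| * |x i| ≤ |y i| + ∑ j ∈ Finset.univ.erase i, |B i j| * |x j| := by
    rw [← abs_mul, h1]
    calc |y i - ∑ j ∈ Finset.univ.erase i, B i j * x j|
        ≤ |y i| + |∑ j ∈ Finset.univ.erase i, B i j * x j| := abs_sub _ _
    _ ≤ |y i| + ∑ j ∈ Finset.univ.erase i, |B i j * x j| := by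
        gcongr; exact Finset.abs_sum_le_sum_abs _ _
    _ = |y i| + ∑ j ∈ Finset.univ.erase i, |B i j| * |x j| := by simp [abs_mul]
  rw [auxJ_mulVec, ← add_div, le_div_iff₀ hd]
  calc |x i| * |B i i| = |B i i| * |x i| := by ring
  _ ≤ |y i| + ∑ j ∈ Finset.univ.erase i, |B i j| * |x j| := h2
  _ = |y i| + ∑ j ∈ Finset.univ.erase i, |B i j| * vecAbs x j := by rfl

/-- If `cmpMat B *ᵥ z = u` then `z = |D|⁻¹ u + J z` componentwise. -/
lemma hm_kz {z u : Fin n → ℝ} (hzu : cmpMat B *ᵥ z = u) (i : Fin n) :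
    z i = u i / |B i i| + (auxJ B *ᵥ z) i := by
  have hd := hm_diag_pos hv hcv i
  have h0 := congrFun hzu i
  rw [cmp_mulVec] at h0
  rw [auxJ_mulVec, ← add_div]
  rw [eq_div_iff hd.ne']
  linarith [h0]

lemma hm_det : IsUnit B.det := by
  rw [isUnit_iff_ne_zero]
  intro hdet
  obtain ⟨x, hx0, hBx⟩ := Matrix.exists_mulVec_eq_zero_iff.mpr hdet
  have hb : ∀ i, vecAbs x i ≤ (auxJ B *ᵥ vecAbs x) i := by
    intro i
    have := hm_kv hv hcv hBx i
    simpa [vecAbs] using this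
  have hz := core_le_zero (auxJ_nonneg B) hv (hm_Jv hv hcv) hb
  exact hx0 (funext fun i => abs_eq_zero.mp (le_antisymm (hz i) (abs_nonneg _)))

lemma hm_cmp_det : IsUnit (cmpMat B).det := by
  rw [isUnit_iff_ne_zero]
  intro hdet
  obtain ⟨x, hx0, hBx⟩ := Matrix.exists_mulVec_eq_zero_iff.mpr hdet
  have hb : ∀ i, vecAbs x i ≤ (auxJ B *ᵥ vecAbs x) i := by
    intro i
    have h1 := hm_kz hv hcv hBx i
    have h2 : |x i| = |(auxJ B *ᵥ x) i| := by
      rw [h1]; simp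
    have h3 : |(auxJ B *ᵥ x) i| ≤ (auxJ B *ᵥ vecAbs x) i := by
      have := abs_mulVec_le (auxJ B) x i
      rwa [matAbs_of_nonneg (auxJ_nonneg B)] at this
    calc vecAbs x i = |x i| := rfl
    _ = |(auxJ B *ᵥ x) i| := h2
    _ ≤ (auxJ B *ᵥ vecAbs x) i := h3
  have hz := core_le_zero (auxJ_nonneg B) hv (hm_Jv hv hcv) hb
  exact hx0 (funext fun i => abs_eq_zero.mp (le_antisymm (hz i) (abs_nonneg _)))

lemma hm_cmp_inv_nonneg (i j : Fin n) : 0 ≤ (cmpMat B)⁻¹ i j := by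
  set z := (cmpMat B)⁻¹ *ᵥ Pi.single j 1 with hzdef
  have hz : cmpMat B *ᵥ z = Pi.single j 1 := by
    rw [hzdef, mulVec_mulVec, Matrix.mul_nonsing_inv _ (hm_cmp_det hv hcv), one_mulVec]
  have hneg : ∀ k, (-z) k ≤ (auxJ B *ᵥ (-z)) k := by
    intro k
    have h1 := hm_kz hv hcv hz k
    have h2 : auxJ B *ᵥ (-z) = -(auxJ B *ᵥ z) := mulVec_neg _ _
    have h3 : 0 ≤ (Pi.single j 1 : Fin n → ℝ) k / |B k k| := by
      apply div_nonneg _ (abs_nonneg _)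
      rw [Pi.single_apply]
      split <;> norm_num
    have h4 := congrFun h2 k
    simp only [Pi.neg_apply] at h4 ⊢
    rw [h4]
    linarith [h1]
  have := core_le_zero (auxJ_nonneg B) hv (hm_Jv hv hcv) hneg i
  have hzi : 0 ≤ z i := by simpa using this
  have : z i = (cmpMat B)⁻¹ i j := by
    rw [hzdef, mulVec_single]
    simp
  rwa [this] at hzi

lemma hm_comp (i j : Fin n) : |B⁻¹ i j| ≤ (cmpMat B)⁻¹ i j := by
  set x := B⁻¹ *ᵥ Pi.single j 1 with hxdef
  set z := (cmpMat B)⁻¹ *ᵥ Pi.single j 1 with hzdef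
  have hx : B *ᵥ x = Pi.single j 1 := by
    rw [hxdef, mulVec_mulVec, Matrix.mul_nonsing_inv _ (hm_det hv hcv), one_mulVec]
  have hz : cmpMat B *ᵥ z = Pi.single j 1 := by
    rw [hzdef, mulVec_mulVec, Matrix.mul_nonsing_inv _ (hm_cmp_det hv hcv), one_mulVec]
  have hb : ∀ k, (vecAbs x - z) k ≤ (auxJ B *ᵥ (vecAbs x - z)) k := by
    intro k
    have h1 := hm_kv hv hcv hx k
    have h2 := hm_kz hv hcv hz k
    have h3 : auxJ B *ᵥ (vecAbs x - z) = auxJ B *ᵥ vecAbs x - auxJ B *ᵥ z := mulVec_sub _ _ _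
    have h4 := congrFun h3 k
    simp only [Pi.sub_apply] at h4 ⊢
    rw [h4]
    have h5 : |(Pi.single j 1 : Fin n → ℝ) k| = (Pi.single j 1 : Fin n → ℝ) k := by
      rw [Pi.single_apply]
      split <;> simp
    rw [h5] at h1
    have h6 : vecAbs x k = |x k| := rfl
    rw [h6]
    linarith [h1, h2]
  have hle := core_le_zero (auxJ_nonneg B) hv (hm_Jv hv hcv) hb i
  have hxi : x i = B⁻¹ i j := by rw [hxdef, mulVec_single]; simp
  have hzi : z i = (cmpMat B)⁻¹ i j := by rw [hzdef, mulVec_single]; simp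
  have : vecAbs x i = |B⁻¹ i j| := by rw [← hxi]; rfl
  simp only [Pi.sub_apply] at hle
  rw [this, hzi] at hle
  linarith

end HM

lemma mmatrix_posvec {W : Matrix (Fin n) (Fin n) ℝ} (hW : NonsingularMMatrix W) :
    ∃ v : Fin n → ℝ, (∀ i, 0 < v i) ∧ W *ᵥ v = fun _ => 1 := by
  refine ⟨W⁻¹ *ᵥ fun _ => 1, ?_, ?_⟩
  · intro i
    have hnn : 0 ≤ (W⁻¹ *ᵥ fun _ => 1) i :=
      mulVec_nonneg hW.2.2 (fun _ => zero_le_one) i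
    rcases hnn.lt_or_eq with h | h
    · exact h
    · exfalso
      have h0 : ∑ j, W⁻¹ i j * 1 = 0 := by rw [← mulVec_eq_sum]; exact h.symm
    -- all entries of row i of W⁻¹ vanish
      have hrow : ∀ j, W⁻¹ i j = 0 := by
        intro j
        have := (Finset.sum_eq_zero_iff_of_nonneg
          (fun j _ => mul_nonneg (hW.2.2 i j) zero_le_one)).mp h0 j (Finset.mem_univ j)
        simpa using this
      have hdet0 : (W⁻¹).det = 0 := Matrix.det_eq_zero_of_row_eq_zero i hrow
      have := Matrix.isUnit_nonsing_inv_det W hW.2.1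
      rw [hdet0] at this
      exact (isUnit_iff_ne_zero.mp this) rfl
  · rw [mulVec_mulVec, Matrix.mul_nonsing_inv _ hW.2.1, one_mulVec]

lemma mmatrix_diag_pos {W : Matrix (Fin n) (Fin n) ℝ} (hW : NonsingularMMatrix W)
    (i : Fin n) : 0 < W i i := by
  have h1 : (W * W⁻¹) i i = 1 := by
    rw [Matrix.mul_nonsing_inv _ hW.2.1, Matrix.one_apply_eq]
  rw [Matrix.mul_apply, ← Finset.sum_erase_add _ _ (Finset.mem_univ i)] at h1
  have h2 : ∑ k ∈ Finset.univ.erase i, W i k * W⁻¹ k i ≤ 0 :=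
    Finset.sum_nonpos fun k hk =>
      mul_nonpos_of_nonpos_of_nonneg (hW.1 i k (Finset.ne_of_mem_erase hk).symm) (hW.2.2 k i)
  have h3 : 1 ≤ W i i * W⁻¹ i i := by linarith
  by_contra hcon
  push_neg at hcon
  have : W i i * W⁻¹ i i ≤ 0 := mul_nonpos_of_nonpos_of_nonneg hcon (hW.2.2 i i)
  linarith

lemma diag_mul_apply {D X : Matrix (Fin n) (Fin n) ℝ} (hD : D.IsDiag) (i j : Fin n) :
    (D * X) i j = D i i * X i j := by
  rw [Matrix.mul_apply]
  rw [Finset.sum_eq_single i]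
  · intro k _ hk
    rw [hD (Ne.symm hk), zero_mul]
  · intro h; exact absurd (Finset.mem_univ i) h

lemma diag_mulVec {D : Matrix (Fin n) (Fin n) ℝ} (hD : D.IsDiag) (x : Fin n → ℝ) (i : Fin n) :
    (D *ᵥ x) i = D i i * x i := by
  rw [mulVec_eq_sum]
  rw [Finset.sum_eq_single i]
  · intro k _ hk
    rw [hD (Ne.symm hk), zero_mul]
  · intro h; exact absurd (Finset.mem_univ i) h

lemma abs_pair {a b : ℝ} (ha : 0 ≤ a) (hb : 0 ≤ b) (hab : a * b = 0) :
    a + b = |a - b| := by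
  rcases mul_eq_zero.mp hab with h | h
  · subst h; rw [abs_of_nonpos (by linarith)]; ring
  · subst h; rw [abs_of_nonneg (by linarith)]; ring

lemma diag_key {p q ξ wf g : ℝ} (hpq : |q| < |p|) (hpq2 : q < p) (hξ : p - q ≤ ξ)
    (hξ0 : 0 < ξ) (hg : 0 ≤ g) (h2 : 2 * ξ * g ≤ |q| - q + wf - |wf|) :
    2 * (|p| - |q|) ≤ |p + ξ| - (|q| + |p - q - ξ| + 2 * ξ * g) := by
  have hp : 0 < p := by
    rcases le_or_gt p 0 with h | h
    · exfalso
      rw [abs_of_nonpos h] at hpq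
      have h5 := neg_le_abs q
      linarith
    · exact h
  rw [abs_of_pos hp] at hpq ⊢
  rw [abs_of_pos (by linarith : (0:ℝ) < p + ξ)]
  rw [abs_of_nonpos (by linarith : p - q - ξ ≤ 0)]
  have h6 := le_abs_self wf
  linarith


end StmtAux

open StmtAux

/-- Theorem 4.2, convergence of Method 3.1 for an H₊-matrix with an H-splitting. -/
theorem stmt_6 {n : ℕ} (A M₁ N₁ φ φ₁ φ₂ G : Matrix (Fin n) (Fin n) ℝ)
    (q : Fin n → ℝ) (ψ : (Fin n → ℝ) → (Fin n → ℝ))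
    (hA : HplusMatrix A)
    (hsplit : A = (M₁ + φ) - (N₁ + φ))
    (hHsplit : NonsingularMMatrix (cmpMat (M₁ + φ) - matAbs (N₁ + φ)))
    (hφ : φ.IsDiag) (hφ₁ : PosDiag φ₁) (hφ₂ : PosDiag φ₂)
    (hφ₂D : ∀ i j, (φ₁ * Matrix.diagonal A.diag) i j ≤ φ₂ i j)
    (hG : ∀ i j, 0 ≤ G i j)
    (hψ : ∀ x y : Fin n → ℝ, ∀ i, |ψ x i - ψ y i| ≤ (G *ᵥ vecAbs (x - y)) i)
    (hGdiag : ∀ i, G i i ≤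
      (φ₁ i i * |N₁ i i + φ i i| - (φ₁ i i * N₁ i i + |φ₁ i i * φ i i|)) / (2 * φ₂ i i))
    (hGoff : ∀ i j, i ≠ j → G i j ≤
      (|φ₁ i i * M₁ i j| + |φ₁ i i * N₁ i j| - |φ₁ i i * A i j|) / (2 * φ₂ i i)) :
    specRad (matAbs ((φ₁ * M₁ + φ₁ * φ + φ₂)⁻¹) *
        (matAbs (φ₁ * N₁ + φ₁ * φ) + matAbs (φ₁ * A - φ₂) + 2 • (φ₂ * G))) < 1 ∧
      ∀ zstar : Fin n → ℝ, ICPsol A q ψ zstar →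
        (∀ z : ℕ → Fin n → ℝ,
          (∀ k, z (k + 1) = (φ₁ * M₁ + φ₁ * φ + φ₂)⁻¹ *ᵥ
            ((φ₁ * N₁ + φ₁ * φ) *ᵥ z k +
              vecAbs ((φ₁ * A - φ₂) *ᵥ z k + φ₁ *ᵥ q + φ₂ *ᵥ ψ (z k)) -
              φ₁ *ᵥ q + φ₂ *ᵥ ψ (z k))) →
          Filter.Tendsto z Filter.atTop (nhds zstar)) ∧
        ∀ w : Fin n → ℝ, ICPsol A q ψ w → w = zstar := by
  have hφ₁d := hφ₁.1
  have hφ₂d := hφ₂.1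
  have hw : ∀ i, 0 < φ₁ i i := hφ₁.2
  have hξ : ∀ i, 0 < φ₂ i i := hφ₂.2
  set Bm := φ₁ * M₁ + φ₁ * φ + φ₂ with hBm
  set Nf := φ₁ * N₁ + φ₁ * φ with hNf
  set Cm := matAbs Nf + matAbs (φ₁ * A - φ₂) + 2 • (φ₂ * G) with hCm
  set W := cmpMat (M₁ + φ) - matAbs (N₁ + φ) with hWdef
  set L := matAbs Bm⁻¹ * Cm with hL
  -- entrywise relation between A, M₁, N₁
  have hMN : ∀ i j, A i j = M₁ i j - N₁ i j := by
    intro i j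
    have h0 := congrFun (congrFun hsplit i) j
    simp only [Matrix.sub_apply, Matrix.add_apply] at h0
    linarith
  obtain ⟨v, hv, hWv⟩ := mmatrix_posvec hHsplit
  -- entry computations
  have hBme : ∀ i j, Bm i j = φ₁ i i * M₁ i j + φ₁ i i * φ i j + φ₂ i j := by
    intro i j
    rw [hBm]
    simp only [Matrix.add_apply, diag_mul_apply hφ₁d]
  have hNfe : ∀ i j, Nf i j = φ₁ i i * N₁ i j + φ₁ i i * φ i j := by
    intro i j
    rw [hNf]
    simp only [Matrix.add_apply, diag_mul_apply hφ₁d]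
  have hCme : ∀ i j, Cm i j =
      |Nf i j| + |φ₁ i i * A i j - φ₂ i j| + 2 * (φ₂ i i * G i j) := by
    intro i j
    have h0 : (2 • (φ₂ * G)) i j = 2 * (φ₂ i i * G i j) := by
      rw [Matrix.smul_apply, nsmul_eq_mul, Nat.cast_ofNat, diag_mul_apply hφ₂d]
    rw [hCm]
    simp only [Matrix.add_apply, Matrix.sub_apply, matAbs]
    rw [h0, diag_mul_apply hφ₁d]
  have hWe_diag : ∀ i, W i i = |M₁ i i + φ i i| - |N₁ i i + φ i i| := by
    intro i
    rw [hWdef]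
    simp [Matrix.sub_apply, cmpMat, matAbs, Matrix.add_apply]
  have hWe_off : ∀ i j, i ≠ j → W i j = -|M₁ i j| - |N₁ i j| := by
    intro i j hij
    rw [hWdef]
    simp [Matrix.sub_apply, cmpMat, matAbs, Matrix.add_apply, if_neg hij, hφ hij]
  -- key entrywise inequality
  have hkey : ∀ i j, 2 * (φ₁ i i * W i j) ≤ cmpMat Bm i j - Cm i j := by
    intro i j
    rcases eq_or_ne i j with rfl | hij
    · have habs : ∀ x : ℝ, φ₁ i i * |x| = |φ₁ i i * x| := fun x => by
        rw [abs_mul, abs_of_pos (hw i)]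
      have e1 : cmpMat Bm i i = |φ₁ i i * M₁ i i + φ₁ i i * φ i i + φ₂ i i| := by
        simp [cmpMat, hBme i i]
      have eA : φ₁ i i * A i i =
          (φ₁ i i * M₁ i i + φ₁ i i * φ i i) - (φ₁ i i * N₁ i i + φ₁ i i * φ i i) := by
        rw [hMN i i]; ring
      have e2 : Cm i i = |φ₁ i i * N₁ i i + φ₁ i i * φ i i| +
          |(φ₁ i i * M₁ i i + φ₁ i i * φ i i) - (φ₁ i i * N₁ i i + φ₁ i i * φ i i) - φ₂ i i|
          + 2 * φ₂ i i * G i i := by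
        rw [hCme i i, hNfe i i, eA]
        ring_nf
      have hWii := mmatrix_diag_pos hHsplit i
      rw [hWe_diag i] at hWii
      have hpq : |φ₁ i i * N₁ i i + φ₁ i i * φ i i| < |φ₁ i i * M₁ i i + φ₁ i i * φ i i| := by
        have h1 : φ₁ i i * |N₁ i i + φ i i| < φ₁ i i * |M₁ i i + φ i i| :=
          mul_lt_mul_of_pos_left (by linarith) (hw i)
        rw [habs, habs] at h1
        calc |φ₁ i i * N₁ i i + φ₁ i i * φ i i| = |φ₁ i i * (N₁ i i + φ i i)| := by ring_nf
        _ < |φ₁ i i * (M₁ i i + φ i i)| := h1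
        _ = |φ₁ i i * M₁ i i + φ₁ i i * φ i i| := by ring_nf
      have hpq2 : φ₁ i i * N₁ i i + φ₁ i i * φ i i < φ₁ i i * M₁ i i + φ₁ i i * φ i i := by
        have h1 : 0 < φ₁ i i * A i i := mul_pos (hw i) (hA.2 i)
        rw [eA] at h1
        linarith
      have hξ' : (φ₁ i i * M₁ i i + φ₁ i i * φ i i) -
          (φ₁ i i * N₁ i i + φ₁ i i * φ i i) ≤ φ₂ i i := by
        have h1 := hφ₂D i i
        rw [diag_mul_apply hφ₁d] at h1
        rw [Matrix.diagonal_apply_eq] at h1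
        have h2 : A.diag i = A i i := rfl
        rw [h2] at h1
        rw [← eA]
        exact h1
      have h2g : 2 * φ₂ i i * G i i ≤
          |φ₁ i i * N₁ i i + φ₁ i i * φ i i| - (φ₁ i i * N₁ i i + φ₁ i i * φ i i)
          + φ₁ i i * φ i i - |φ₁ i i * φ i i| := by
        have h1 := hGdiag i
        have h2 : G i i * (2 * φ₂ i i) ≤
            φ₁ i i * |N₁ i i + φ i i| - (φ₁ i i * N₁ i i + |φ₁ i i * φ i i|) :=
          (le_div_iff₀ (by linarith [hξ i])).mp h1
        have h3 : φ₁ i i * |N₁ i i + φ i i| = |φ₁ i i * N₁ i i + φ₁ i i * φ i i| := by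
          rw [habs]; ring_nf
        rw [h3] at h2
        linarith
      have hdk := diag_key hpq hpq2 hξ' (hξ i) (hG i i) (by linarith [h2g] :
        2 * φ₂ i i * G i i ≤ |φ₁ i i * N₁ i i + φ₁ i i * φ i i|
          - (φ₁ i i * N₁ i i + φ₁ i i * φ i i) + φ₁ i i * φ i i - |φ₁ i i * φ i i|)
      have e3 : φ₁ i i * W i i =
          |φ₁ i i * M₁ i i + φ₁ i i * φ i i| - |φ₁ i i * N₁ i i + φ₁ i i * φ i i| := by
        rw [hWe_diag i, mul_sub, habs, habs]
        ring_nf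
      rw [e1, e2, e3]
      linarith [hdk]
    · have hφ0 : φ i j = 0 := hφ hij
      have hφ₂0 : φ₂ i j = 0 := hφ₂d hij
      have habs : ∀ x : ℝ, φ₁ i i * |x| = |φ₁ i i * x| := fun x => by
        rw [abs_mul, abs_of_pos (hw i)]
      have e1 : cmpMat Bm i j = -|φ₁ i i * M₁ i j| := by
        simp [cmpMat, if_neg hij, hBme i j, hφ0, hφ₂0]
      have e2 : Cm i j = |φ₁ i i * N₁ i j| + |φ₁ i i * A i j| + 2 * (φ₂ i i * G i j) := by
        rw [hCme i j, hNfe i j, hφ0, hφ₂0]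
        try ring_nf
        try norm_num
      have e3 : φ₁ i i * W i j = -|φ₁ i i * M₁ i j| - |φ₁ i i * N₁ i j| := by
        rw [hWe_off i j hij, mul_sub, mul_neg, habs, habs]
        try ring
      have hGb : 2 * (φ₂ i i * G i j) ≤
          |φ₁ i i * M₁ i j| + |φ₁ i i * N₁ i j| - |φ₁ i i * A i j| := by
        have h1 := hGoff i j hij
        have h2 := (le_div_iff₀ (by linarith [hξ i] : (0:ℝ) < 2 * φ₂ i i)).mp h1
        linarith
      rw [e1, e2, e3]
      linarith
  -- nonnegativity of Cm
  have hCnn : ∀ i j, 0 ≤ Cm i j := by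
    intro i j
    rw [hCme i j]
    have := hG i j
    have := (hξ i).le
    have h1 : 0 ≤ 2 * (φ₂ i i * G i j) := by positivity
    positivity
  -- (φ₁ * W) *ᵥ v = diag of φ₁
  have hφ₁Wv : ∀ i, ((φ₁ * W) *ᵥ v) i = φ₁ i i := by
    intro i
    rw [← mulVec_mulVec, hWv, diag_mulVec hφ₁d]
    norm_num
  have hdgap : ∀ i, (Cm *ᵥ v) i + 2 * φ₁ i i ≤ (cmpMat Bm *ᵥ v) i := by
    intro i
    have h1 : ∑ j, (2 * (φ₁ i i * W i j)) * v j ≤ ∑ j, (cmpMat Bm i j - Cm i j) * v j :=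
      Finset.sum_le_sum fun j _ => mul_le_mul_of_nonneg_right (hkey i j) (hv j).le
    have h2 : ∑ j, (2 * (φ₁ i i * W i j)) * v j = 2 * ((φ₁ * W) *ᵥ v) i := by
      rw [mulVec_eq_sum, Finset.mul_sum]
      exact Finset.sum_congr rfl fun j _ => by rw [diag_mul_apply hφ₁d]; ring
    have h3 : ∑ j, (cmpMat Bm i j - Cm i j) * v j = (cmpMat Bm *ᵥ v) i - (Cm *ᵥ v) i := by
      rw [mulVec_eq_sum, mulVec_eq_sum, ← Finset.sum_sub_distrib]
      exact Finset.sum_congr rfl fun j _ => by ring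
    rw [h2, h3, hφ₁Wv i] at h1
    linarith
  have hcv : ∀ i, 0 < (cmpMat Bm *ᵥ v) i := by
    intro i
    have h1 : 0 ≤ (Cm *ᵥ v) i := mulVec_nonneg hCnn (fun k => (hv k).le) i
    have := hdgap i
    have := hw i
    linarith
  -- H-matrix facts for Bm
  have hBdet : IsUnit Bm.det := hm_det hv hcv
  have hcmpdet : IsUnit (cmpMat Bm).det := hm_cmp_det hv hcv
  have hKnn : ∀ i j, 0 ≤ (cmpMat Bm)⁻¹ i j := hm_cmp_inv_nonneg hv hcv
  have hcomp : ∀ i j, |Bm⁻¹ i j| ≤ (cmpMat Bm)⁻¹ i j := hm_comp hv hcv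
  have hLnn : ∀ i j, 0 ≤ L i j := by
    intro i j
    rw [hL, Matrix.mul_apply]
    exact Finset.sum_nonneg fun k _ => mul_nonneg (abs_nonneg _) (hCnn k j)
  -- L v < v
  have hLv : ∀ i, (L *ᵥ v) i < v i := by
    intro i
    have hCv : ∀ k, 0 ≤ (Cm *ᵥ v) k := mulVec_nonneg hCnn fun k => (hv k).le
    have e0 : (L *ᵥ v) i = (matAbs Bm⁻¹ *ᵥ (Cm *ᵥ v)) i := by
      rw [hL, ← mulVec_mulVec]
    have step1 : (matAbs Bm⁻¹ *ᵥ (Cm *ᵥ v)) i ≤ ((cmpMat Bm)⁻¹ *ᵥ (Cm *ᵥ v)) i := by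
      rw [mulVec_eq_sum, mulVec_eq_sum]
      exact Finset.sum_le_sum fun k _ =>
        mul_le_mul_of_nonneg_right (hcomp i k) (hCv k)
    set d : Fin n → ℝ := fun k => (cmpMat Bm *ᵥ v) k - (Cm *ᵥ v) k with hd
    have hdpos : ∀ k, 0 < d k := by
      intro k
      have := hdgap k
      have := hw k
      simp only [hd]
      linarith
    have hKd : ((cmpMat Bm)⁻¹ *ᵥ d) i = v i - ((cmpMat Bm)⁻¹ *ᵥ (Cm *ᵥ v)) i := by
      have h1 : (cmpMat Bm)⁻¹ *ᵥ (cmpMat Bm *ᵥ v) = v := by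
        rw [mulVec_mulVec, Matrix.nonsing_inv_mul _ hcmpdet, one_mulVec]
      have h2 : (cmpMat Bm)⁻¹ *ᵥ d =
          (cmpMat Bm)⁻¹ *ᵥ (cmpMat Bm *ᵥ v) - (cmpMat Bm)⁻¹ *ᵥ (Cm *ᵥ v) := by
        rw [← mulVec_sub]
        rfl
      rw [h2, h1]
      rfl
    have hKdpos : 0 < ((cmpMat Bm)⁻¹ *ᵥ d) i := by
      rw [mulVec_eq_sum]
      rcases (Finset.sum_nonneg fun k (_ : k ∈ Finset.univ) =>
        mul_nonneg (hKnn i k) (hdpos k).le).lt_or_eq with h | h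
      · exact h
      · exfalso
        have hall := (Finset.sum_eq_zero_iff_of_nonneg fun k _ =>
          mul_nonneg (hKnn i k) (hdpos k).le).mp h.symm
        have hrow : ∀ k, (cmpMat Bm)⁻¹ i k = 0 := by
          intro k
          have h1 := hall k (Finset.mem_univ k)
          rcases mul_eq_zero.mp h1 with h2 | h2
          · exact h2
          · exact absurd h2 (hdpos k).ne'
        have hdet0 : ((cmpMat Bm)⁻¹).det = 0 := Matrix.det_eq_zero_of_row_eq_zero i hrow
        have := Matrix.isUnit_nonsing_inv_det _ hcmpdet
        rw [hdet0] at this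
        exact (isUnit_iff_ne_zero.mp this) rfl
    rw [e0]
    linarith [step1, hKdpos, hKd]
  -- the contraction factor
  set cr : ℝ := ↑(Finset.univ.sup fun k => Real.toNNReal ((L *ᵥ v) k / v k)) with hcr
  have hcr0 : 0 ≤ cr := NNReal.coe_nonneg _
  have hcrb : ∀ k, (L *ᵥ v) k ≤ cr * v k := by
    intro k
    have h1 : (L *ᵥ v) k / v k ≤ cr := by
      have h2 := Finset.le_sup (f := fun k => Real.toNNReal ((L *ᵥ v) k / v k))
        (Finset.mem_univ k)
      have h3 : ((Real.toNNReal ((L *ᵥ v) k / v k) : ℝ≥0) : ℝ) ≤ cr := by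
        rw [hcr]; exact_mod_cast h2
      rwa [Real.coe_toNNReal _
        (div_nonneg (mulVec_nonneg hLnn (fun j => (hv j).le) k) (hv k).le)] at h3
    calc (L *ᵥ v) k = ((L *ᵥ v) k / v k) * v k := (div_mul_cancel₀ _ (hv k).ne').symm
    _ ≤ cr * v k := mul_le_mul_of_nonneg_right h1 (hv k).le
  have hcr1 : cr < 1 := by
    have h4 : (Finset.univ.sup fun k => Real.toNNReal ((L *ᵥ v) k / v k)) < 1 := by
      rw [Finset.sup_lt_iff (by norm_num : (⊥ : ℝ≥0) < 1)]
      intro k _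
      rw [← Real.toNNReal_one]
      exact (Real.toNNReal_lt_toNNReal_iff one_pos).mpr ((div_lt_one (hv k)).mpr (hLv k))
    rw [hcr]
    exact_mod_cast h4
  constructor
  · show specRad L < 1
    unfold specRad
    have hspec : ∀ lam ∈ spectrum ℂ (L.map (algebraMap ℝ ℂ)), ‖lam‖ ≤ cr := by
      intro lam hlam
      rw [spectrum.mem_iff] at hlam
      have hdet0 : ((algebraMap ℂ (Matrix (Fin n) (Fin n) ℂ)) lam
          - L.map (algebraMap ℝ ℂ)).det = 0 := by
        by_contra hne
        exact hlam ((Matrix.isUnit_iff_isUnit_det _).mpr (isUnit_iff_ne_zero.mpr hne))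
      obtain ⟨x, hx0, hxe⟩ := Matrix.exists_mulVec_eq_zero_iff.mpr hdet0
      have heig : ∀ i, lam * x i = ∑ j, (L i j : ℂ) * x j := by
        intro i
        have h1 := congrFun hxe i
        rw [Matrix.sub_mulVec] at h1
        have h2 : ((algebraMap ℂ (Matrix (Fin n) (Fin n) ℂ)) lam *ᵥ x) i = lam * x i := by
          rw [Matrix.algebraMap_eq_diagonal, mulVec_diagonal]
          simp
        have h3 : (L.map (algebraMap ℝ ℂ) *ᵥ x) i = ∑ j, (L i j : ℂ) * x j := by
          simp [Matrix.mulVec, dotProduct, Matrix.map_apply, Complex.coe_algebraMap]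
        simp only [Pi.sub_apply] at h1
        rw [h2, h3] at h1
        exact sub_eq_zero.mp h1
      obtain ⟨j₀, hj₀⟩ := Function.ne_iff.mp hx0
      obtain ⟨i, -, hi⟩ := Finset.exists_max_image Finset.univ (fun j => ‖x j‖ / v j)
        ⟨j₀, Finset.mem_univ j₀⟩
      have hj₀' : x j₀ ≠ 0 := by simpa using hj₀
      have hxi : 0 < ‖x i‖ := by
        have h1 : 0 < ‖x j₀‖ / v j₀ := div_pos (norm_pos_iff.mpr hj₀') (hv j₀)
        have h2 := hi j₀ (Finset.mem_univ j₀)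
        have h3 : 0 < ‖x i‖ / v i := lt_of_lt_of_le h1 h2
        by_contra hc
        push_neg at hc
        have h4 : ‖x i‖ = 0 := le_antisymm hc (norm_nonneg _)
        rw [h4, zero_div] at h3
        exact lt_irrefl 0 h3
      have hxb : ∀ j, ‖x j‖ ≤ ‖x i‖ / v i * v j := by
        intro j
        have h1 := hi j (Finset.mem_univ j)
        rw [div_le_div_iff₀ (hv j) (hv i)] at h1
        rw [div_mul_eq_mul_div, le_div_iff₀ (hv i)]
        linarith
      have hmain : ‖lam‖ * ‖x i‖ ≤ cr * ‖x i‖ := by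
        calc ‖lam‖ * ‖x i‖ = ‖lam * x i‖ := (norm_mul _ _).symm
        _ = ‖∑ j, (L i j : ℂ) * x j‖ := by rw [heig i]
        _ ≤ ∑ j, ‖(L i j : ℂ) * x j‖ := norm_sum_le _ _
        _ = ∑ j, L i j * ‖x j‖ := by
            refine Finset.sum_congr rfl fun j _ => ?_
            rw [norm_mul, Complex.norm_real, Real.norm_eq_abs, abs_of_nonneg (hLnn i j)]
        _ ≤ ∑ j, L i j * (‖x i‖ / v i * v j) :=
            Finset.sum_le_sum fun j _ => mul_le_mul_of_nonneg_left (hxb j) (hLnn i j)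
        _ = ‖x i‖ / v i * ((L *ᵥ v) i) := by
            rw [StmtAux.mulVec_eq_sum, Finset.mul_sum]
            exact Finset.sum_congr rfl fun j _ => by ring
        _ ≤ ‖x i‖ / v i * (cr * v i) :=
            mul_le_mul_of_nonneg_left (hcrb i) (by have := hv i; positivity)
        _ = cr * ‖x i‖ := by
            have hne : v i ≠ 0 := (hv i).ne'
            field_simp
      exact le_of_mul_le_mul_right hmain hxi
    have hsr : spectralRadius ℂ (L.map (algebraMap ℝ ℂ)) ≤ (Real.toNNReal cr : ℝ≥0∞) := by
      refine iSup₂_le fun k hk => ?_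
      rw [ENNReal.coe_le_coe, ← NNReal.coe_le_coe, coe_nnnorm, Real.coe_toNNReal _ hcr0]
      exact hspec k hk
    have h1 := ENNReal.toReal_mono (by simp : ((Real.toNNReal cr : ℝ≥0∞)) ≠ ⊤) hsr
    rw [ENNReal.coe_toReal, Real.coe_toNNReal _ hcr0] at h1
    exact lt_of_le_of_lt h1 hcr1
  · intro zstar hsol
    have hBN : Bm = Nf + (φ₁ * A + φ₂) := by
      rw [hBm, hNf, hsplit, Matrix.mul_sub, Matrix.mul_add, Matrix.mul_add]
      abel
    have hfixgen : ∀ u : Fin n → ℝ, ICPsol A q ψ u →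
        u = Bm⁻¹ *ᵥ (Nf *ᵥ u + vecAbs ((φ₁ * A - φ₂) *ᵥ u + φ₁ *ᵥ q + φ₂ *ᵥ ψ u)
          - φ₁ *ᵥ q + φ₂ *ᵥ ψ u) := by
      intro u hu
      obtain ⟨h1, h2, h3⟩ := hu
      have hprod : ∀ i, ((A *ᵥ u) i + q i) * (u i - ψ u i) = 0 := by
        intro i
        have h4 : ∑ k, (A *ᵥ u + q) k * (u - ψ u) k = 0 := h3
        have h5 := (Finset.sum_eq_zero_iff_of_nonneg fun k _ =>
          mul_nonneg (h1 k) (h2 k)).mp h4 i (Finset.mem_univ i)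
        simpa using h5
      have hBu : Bm *ᵥ u = Nf *ᵥ u + vecAbs ((φ₁ * A - φ₂) *ᵥ u + φ₁ *ᵥ q + φ₂ *ᵥ ψ u)
          - φ₁ *ᵥ q + φ₂ *ᵥ ψ u := by
        funext i
        have h1' : 0 ≤ (A *ᵥ u) i + q i := by simpa using h1 i
        have h2' : 0 ≤ u i - ψ u i := by simpa using h2 i
        have ha : 0 ≤ φ₁ i i * ((A *ᵥ u) i + q i) := mul_nonneg (hw i).le h1'
        have hb : 0 ≤ φ₂ i i * (u i - ψ u i) := mul_nonneg (hξ i).le h2'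
        have hab : (φ₁ i i * ((A *ᵥ u) i + q i)) * (φ₂ i i * (u i - ψ u i)) = 0 := by
          rw [show (φ₁ i i * ((A *ᵥ u) i + q i)) * (φ₂ i i * (u i - ψ u i))
            = (φ₁ i i * φ₂ i i) * (((A *ᵥ u) i + q i) * (u i - ψ u i)) from by ring,
            hprod i, mul_zero]
        have hp := abs_pair ha hb hab
        have eBu : (Bm *ᵥ u) i = (Nf *ᵥ u) i + (φ₁ i i * (A *ᵥ u) i + φ₂ i i * u i) := by
          have e1 : ((φ₁ * A) *ᵥ u) i = φ₁ i i * (A *ᵥ u) i := by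
            rw [← mulVec_mulVec, diag_mulVec hφ₁d]
          have e2 : (φ₂ *ᵥ u) i = φ₂ i i * u i := diag_mulVec hφ₂d u i
          rw [hBN, Matrix.add_mulVec Nf _ u, Matrix.add_mulVec (φ₁ * A) φ₂ u]
          simp only [Pi.add_apply]
          rw [e1, e2]
        have earg : ((φ₁ * A - φ₂) *ᵥ u + φ₁ *ᵥ q + φ₂ *ᵥ ψ u) i
            = φ₁ i i * ((A *ᵥ u) i + q i) - φ₂ i i * (u i - ψ u i) := by
          rw [Matrix.sub_mulVec]
          simp only [Pi.add_apply, Pi.sub_apply]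
          rw [← mulVec_mulVec, diag_mulVec hφ₁d, diag_mulVec hφ₂d, diag_mulVec hφ₁d,
            diag_mulVec hφ₂d]
          ring
        have evA : vecAbs ((φ₁ * A - φ₂) *ᵥ u + φ₁ *ᵥ q + φ₂ *ᵥ ψ u) i
            = |φ₁ i i * ((A *ᵥ u) i + q i) - φ₂ i i * (u i - ψ u i)| := by
          rw [show vecAbs ((φ₁ * A - φ₂) *ᵥ u + φ₁ *ᵥ q + φ₂ *ᵥ ψ u) i
            = |((φ₁ * A - φ₂) *ᵥ u + φ₁ *ᵥ q + φ₂ *ᵥ ψ u) i| from rfl, earg]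
        have e3 : (φ₁ *ᵥ q) i = φ₁ i i * q i := diag_mulVec hφ₁d q i
        have e4 : (φ₂ *ᵥ ψ u) i = φ₂ i i * ψ u i := diag_mulVec hφ₂d (ψ u) i
        show (Bm *ᵥ u) i = (Nf *ᵥ u) i
            + vecAbs ((φ₁ * A - φ₂) *ᵥ u + φ₁ *ᵥ q + φ₂ *ᵥ ψ u) i
            - (φ₁ *ᵥ q) i + (φ₂ *ᵥ ψ u) i
        rw [eBu, evA, ← hp, e3, e4]
        ring
      rw [← hBu, mulVec_mulVec, Matrix.nonsing_inv_mul _ hBdet, one_mulVec]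
    have hstep : ∀ u u' : Fin n → ℝ, ∀ i,
        |(Bm⁻¹ *ᵥ (Nf *ᵥ u + vecAbs ((φ₁ * A - φ₂) *ᵥ u + φ₁ *ᵥ q + φ₂ *ᵥ ψ u)
            - φ₁ *ᵥ q + φ₂ *ᵥ ψ u)
          - Bm⁻¹ *ᵥ (Nf *ᵥ u' + vecAbs ((φ₁ * A - φ₂) *ᵥ u' + φ₁ *ᵥ q + φ₂ *ᵥ ψ u')
            - φ₁ *ᵥ q + φ₂ *ᵥ ψ u')) i|
        ≤ (L *ᵥ vecAbs (u - u')) i := by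
      intro u u' i
      set X := Nf *ᵥ u + vecAbs ((φ₁ * A - φ₂) *ᵥ u + φ₁ *ᵥ q + φ₂ *ᵥ ψ u)
          - φ₁ *ᵥ q + φ₂ *ᵥ ψ u with hX
      set Y := Nf *ᵥ u' + vecAbs ((φ₁ * A - φ₂) *ᵥ u' + φ₁ *ᵥ q + φ₂ *ᵥ ψ u')
          - φ₁ *ᵥ q + φ₂ *ᵥ ψ u' with hY
      have h0 : Bm⁻¹ *ᵥ X - Bm⁻¹ *ᵥ Y = Bm⁻¹ *ᵥ (X - Y) := (mulVec_sub _ _ _).symm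
      rw [h0]
      refine le_trans (abs_mulVec_le _ _ _) ?_
      have hXY : ∀ k, vecAbs (X - Y) k ≤ (Cm *ᵥ vecAbs (u - u')) k := by
        intro k
        have hNfk : |(Nf *ᵥ u) k - (Nf *ᵥ u') k| ≤ (matAbs Nf *ᵥ vecAbs (u - u')) k := by
          have h5 := abs_mulVec_le Nf (u - u') k
          rw [mulVec_sub] at h5
          simpa using h5
        have hAk : |((φ₁ * A - φ₂) *ᵥ u) k - ((φ₁ * A - φ₂) *ᵥ u') k|
            ≤ (matAbs (φ₁ * A - φ₂) *ᵥ vecAbs (u - u')) k := by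
          have h5 := abs_mulVec_le (φ₁ * A - φ₂) (u - u') k
          rw [mulVec_sub] at h5
          simpa using h5
        have hψk : |ψ u k - ψ u' k| ≤ (G *ᵥ vecAbs (u - u')) k := hψ u u' k
        have hGnn : 0 ≤ (G *ᵥ vecAbs (u - u')) k :=
          mulVec_nonneg hG (fun j => abs_nonneg _) k
        have hCmv : (Cm *ᵥ vecAbs (u - u')) k = (matAbs Nf *ᵥ vecAbs (u - u')) k
            + (matAbs (φ₁ * A - φ₂) *ᵥ vecAbs (u - u')) k
            + 2 * (φ₂ k k * (G *ᵥ vecAbs (u - u')) k) := by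
          rw [hCm, Matrix.add_mulVec (matAbs Nf + matAbs (φ₁ * A - φ₂)) (2 • (φ₂ * G)),
            Matrix.add_mulVec (matAbs Nf) (matAbs (φ₁ * A - φ₂))]
          have h6 : (2 • (φ₂ * G)) *ᵥ vecAbs (u - u')
              = (φ₂ * G) *ᵥ vecAbs (u - u') + (φ₂ * G) *ᵥ vecAbs (u - u') := by
            rw [two_smul, Matrix.add_mulVec]
          have h7 : ((φ₂ * G) *ᵥ vecAbs (u - u')) k = φ₂ k k * (G *ᵥ vecAbs (u - u')) k := by
            rw [← mulVec_mulVec, diag_mulVec hφ₂d]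
          simp only [Pi.add_apply, h6, h7]
          ring
        have hXk : (X - Y) k = ((Nf *ᵥ u) k - (Nf *ᵥ u') k)
            + (vecAbs ((φ₁ * A - φ₂) *ᵥ u + φ₁ *ᵥ q + φ₂ *ᵥ ψ u) k
              - vecAbs ((φ₁ * A - φ₂) *ᵥ u' + φ₁ *ᵥ q + φ₂ *ᵥ ψ u') k)
            + φ₂ k k * (ψ u k - ψ u' k) := by
          rw [hX, hY]
          simp only [Pi.add_apply, Pi.sub_apply]
          rw [diag_mulVec hφ₂d (ψ u) k, diag_mulVec hφ₂d (ψ u') k]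
          ring
        have habsdiff : |vecAbs ((φ₁ * A - φ₂) *ᵥ u + φ₁ *ᵥ q + φ₂ *ᵥ ψ u) k
              - vecAbs ((φ₁ * A - φ₂) *ᵥ u' + φ₁ *ᵥ q + φ₂ *ᵥ ψ u') k|
            ≤ (matAbs (φ₁ * A - φ₂) *ᵥ vecAbs (u - u')) k
              + φ₂ k k * (G *ᵥ vecAbs (u - u')) k := by
          have h8 : |vecAbs ((φ₁ * A - φ₂) *ᵥ u + φ₁ *ᵥ q + φ₂ *ᵥ ψ u) k
                - vecAbs ((φ₁ * A - φ₂) *ᵥ u' + φ₁ *ᵥ q + φ₂ *ᵥ ψ u') k|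
              ≤ |((φ₁ * A - φ₂) *ᵥ u + φ₁ *ᵥ q + φ₂ *ᵥ ψ u) k
                - ((φ₁ * A - φ₂) *ᵥ u' + φ₁ *ᵥ q + φ₂ *ᵥ ψ u') k| :=
            abs_abs_sub_abs_le_abs_sub _ _
          have h9 : ((φ₁ * A - φ₂) *ᵥ u + φ₁ *ᵥ q + φ₂ *ᵥ ψ u) k
              - ((φ₁ * A - φ₂) *ᵥ u' + φ₁ *ᵥ q + φ₂ *ᵥ ψ u') k
              = (((φ₁ * A - φ₂) *ᵥ u) k - ((φ₁ * A - φ₂) *ᵥ u') k)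
                + φ₂ k k * (ψ u k - ψ u' k) := by
            simp only [Pi.add_apply]
            rw [diag_mulVec hφ₂d (ψ u) k, diag_mulVec hφ₂d (ψ u') k]
            ring
          rw [h9] at h8
          have h10 : |(((φ₁ * A - φ₂) *ᵥ u) k - ((φ₁ * A - φ₂) *ᵥ u') k)
                + φ₂ k k * (ψ u k - ψ u' k)|
              ≤ |((φ₁ * A - φ₂) *ᵥ u) k - ((φ₁ * A - φ₂) *ᵥ u') k|
                + φ₂ k k * |ψ u k - ψ u' k| := by
            refine le_trans (abs_add_le _ _) ?_
            rw [abs_mul, abs_of_pos (hξ k)]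
          have h11 : φ₂ k k * |ψ u k - ψ u' k| ≤ φ₂ k k * (G *ᵥ vecAbs (u - u')) k :=
            mul_le_mul_of_nonneg_left hψk (hξ k).le
          calc |vecAbs ((φ₁ * A - φ₂) *ᵥ u + φ₁ *ᵥ q + φ₂ *ᵥ ψ u) k
                - vecAbs ((φ₁ * A - φ₂) *ᵥ u' + φ₁ *ᵥ q + φ₂ *ᵥ ψ u') k|
              ≤ |(((φ₁ * A - φ₂) *ᵥ u) k - ((φ₁ * A - φ₂) *ᵥ u') k)
                + φ₂ k k * (ψ u k - ψ u' k)| := h8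
          _ ≤ |((φ₁ * A - φ₂) *ᵥ u) k - ((φ₁ * A - φ₂) *ᵥ u') k|
                + φ₂ k k * |ψ u k - ψ u' k| := h10
          _ ≤ (matAbs (φ₁ * A - φ₂) *ᵥ vecAbs (u - u')) k
                + φ₂ k k * (G *ᵥ vecAbs (u - u')) k := add_le_add hAk h11
        have h12 : φ₂ k k * |ψ u k - ψ u' k| ≤ φ₂ k k * (G *ᵥ vecAbs (u - u')) k :=
          mul_le_mul_of_nonneg_left hψk (hξ k).le
        have h13 : vecAbs (X - Y) k = |(X - Y) k| := rfl
        rw [h13, hXk, hCmv]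
        have h14 : |((Nf *ᵥ u) k - (Nf *ᵥ u') k)
            + (vecAbs ((φ₁ * A - φ₂) *ᵥ u + φ₁ *ᵥ q + φ₂ *ᵥ ψ u) k
              - vecAbs ((φ₁ * A - φ₂) *ᵥ u' + φ₁ *ᵥ q + φ₂ *ᵥ ψ u') k)
            + φ₂ k k * (ψ u k - ψ u' k)|
            ≤ |(Nf *ᵥ u) k - (Nf *ᵥ u') k|
              + |vecAbs ((φ₁ * A - φ₂) *ᵥ u + φ₁ *ᵥ q + φ₂ *ᵥ ψ u) k
                - vecAbs ((φ₁ * A - φ₂) *ᵥ u' + φ₁ *ᵥ q + φ₂ *ᵥ ψ u') k|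
              + φ₂ k k * |ψ u k - ψ u' k| := by
          refine le_trans (abs_add_le _ _) ?_
          have := abs_add_le ((Nf *ᵥ u) k - (Nf *ᵥ u') k)
            ((vecAbs ((φ₁ * A - φ₂) *ᵥ u + φ₁ *ᵥ q + φ₂ *ᵥ ψ u) k
              - vecAbs ((φ₁ * A - φ₂) *ᵥ u' + φ₁ *ᵥ q + φ₂ *ᵥ ψ u') k))
          have h15 : |φ₂ k k * (ψ u k - ψ u' k)| = φ₂ k k * |ψ u k - ψ u' k| := by
            rw [abs_mul, abs_of_pos (hξ k)]
          linarith
        linarith [h14, hNfk, habsdiff, h12]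
      have h16 : (matAbs Bm⁻¹ *ᵥ vecAbs (X - Y)) i
          ≤ (matAbs Bm⁻¹ *ᵥ (Cm *ᵥ vecAbs (u - u'))) i :=
        mulVec_mono (fun a b => abs_nonneg _) hXY i
      have h17 : (matAbs Bm⁻¹ *ᵥ (Cm *ᵥ vecAbs (u - u'))) i = (L *ᵥ vecAbs (u - u')) i := by
        rw [hL, ← mulVec_mulVec]
      linarith
    refine ⟨?_, ?_⟩
    · intro z hrec
      have hfix := hfixgen zstar hsol
      have hstep' : ∀ k i, vecAbs (z (k + 1) - zstar) i ≤ (L *ᵥ vecAbs (z k - zstar)) i := by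
        intro k i
        have h1 := hstep (z k) zstar i
        rw [← hrec k, ← hfix] at h1
        exact h1
      set t : ℝ := ↑(Finset.univ.sup fun k => Real.toNNReal (vecAbs (z 0 - zstar) k / v k))
        with htdef
      have ht0 : 0 ≤ t := NNReal.coe_nonneg _
      have htb : ∀ k, vecAbs (z 0 - zstar) k ≤ t * v k := by
        intro k
        have h1 : vecAbs (z 0 - zstar) k / v k ≤ t := by
          have h2 := Finset.le_sup
            (f := fun k => Real.toNNReal (vecAbs (z 0 - zstar) k / v k)) (Finset.mem_univ k)
          have h3 : ((Real.toNNReal (vecAbs (z 0 - zstar) k / v k) : ℝ≥0) : ℝ) ≤ t := by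
            rw [htdef]; exact_mod_cast h2
          have h4 : 0 ≤ vecAbs (z 0 - zstar) k := abs_nonneg _
          rwa [Real.coe_toNNReal _ (div_nonneg h4 (hv k).le)] at h3
        calc vecAbs (z 0 - zstar) k = (vecAbs (z 0 - zstar) k / v k) * v k :=
          (div_mul_cancel₀ _ (hv k).ne').symm
        _ ≤ t * v k := mul_le_mul_of_nonneg_right h1 (hv k).le
      have hind : ∀ m, ∀ k, vecAbs (z m - zstar) k ≤ t * cr ^ m * v k := by
        intro m
        induction m with
        | zero => simpa using htb
        | succ m ih =>
          intro k
          have h1 := hstep' m k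
          have h2 : (L *ᵥ vecAbs (z m - zstar)) k ≤ (L *ᵥ fun j => t * cr ^ m * v j) k :=
            mulVec_mono hLnn ih k
          have h3 : (L *ᵥ fun j => t * cr ^ m * v j) k = t * cr ^ m * (L *ᵥ v) k := by
            rw [StmtAux.mulVec_eq_sum, StmtAux.mulVec_eq_sum, Finset.mul_sum]
            exact Finset.sum_congr rfl fun j _ => by ring
          have h4 : t * cr ^ m * (L *ᵥ v) k ≤ t * cr ^ m * (cr * v k) :=
            mul_le_mul_of_nonneg_left (hcrb k) (by positivity)
          calc vecAbs (z (m + 1) - zstar) k ≤ (L *ᵥ vecAbs (z m - zstar)) k := h1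
          _ ≤ t * cr ^ m * (L *ᵥ v) k := h3 ▸ h2
          _ ≤ t * cr ^ m * (cr * v k) := h4
          _ = t * cr ^ (m + 1) * v k := by ring
      rw [tendsto_pi_nhds]
      intro i
      have hzero : Filter.Tendsto (fun m => z m i - zstar i) Filter.atTop (nhds 0) := by
        refine squeeze_zero_norm (a := fun m => t * v i * cr ^ m) (fun m => ?_) ?_
        · have h1 := hind m i
          rw [Real.norm_eq_abs]
          calc |z m i - zstar i| = vecAbs (z m - zstar) i := rfl
          _ ≤ t * cr ^ m * v i := h1
          _ = t * v i * cr ^ m := by ring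
        · simpa using (tendsto_pow_atTop_nhds_zero_of_lt_one hcr0 hcr1).const_mul (t * v i)
      have h5 := hzero.add_const (zstar i)
      simpa using h5
    · intro w hwsol
      have h1 := hfixgen w hwsol
      have h2 := hfixgen zstar hsol
      have hb : ∀ i, vecAbs (w - zstar) i ≤ (L *ᵥ vecAbs (w - zstar)) i := by
        intro i
        have h3 := hstep w zstar i
        rw [← h1, ← h2] at h3
        exact h3
      have h4 := core_le_zero hLnn hv hLv hb
      funext i
      have h5 : |w i - zstar i| ≤ 0 := h4 i
      have h6 := abs_nonneg (w i - zstar i)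
      have h7 : w i - zstar i = 0 := abs_eq_zero.mp (le_antisymm h5 h6)
      linarith
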